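/- Let p be a prime and let 𝓕 be a family of (2p−1)-element subsets of {1,2,…,n} such that no two distinct members F, F' of 𝓕 satisfy |F ∩ F'| = p−1. Then the number of members of 𝓕 is at most the binomial coefficient C(n, p−1). -/

import Mathlib

open Finset Submodule Module

namespace FWaux

variable (p : ℕ) {n : ℕ}

abbrev V (p n : ℕ) := Finset (Fin n) → ZMod p

noncomputable def mono (T : Finset (Fin n)) : V p n :=
  fun A => if T ⊆ A then 1 else 0

lemma mono_mul (T T' : Finset (Fin n)) :
    mono p T * mono p T' = mono p (T ∪ T') := by
  funext A
  simp only [mono, Pi.mul_apply, Finset.union_subset_iff]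
  by_cases h1 : T ⊆ A <;> by_cases h2 : T' ⊆ A <;> simp [h1, h2]

noncomputable def W (d : ℕ) : Submodule (ZMod p) (V p n) :=
  Submodule.span (ZMod p) (mono p '' {T : Finset (Fin n) | T.card ≤ d})

lemma mono_mem_W {T : Finset (Fin n)} {d : ℕ} (h : T.card ≤ d) :
    mono p T ∈ W p d :=
  Submodule.subset_span ⟨T, h, rfl⟩

lemma W_mono {a b : ℕ} (h : a ≤ b) : (W p a : Submodule (ZMod p) (V p n)) ≤ W p b :=
  Submodule.span_mono (Set.image_mono fun T hT => le_trans hT h)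

lemma one_mem_W (d : ℕ) : (1 : V p n) ∈ W p d := by
  have : (1 : V p n) = mono p ∅ := by
    funext A; simp [mono]
  rw [this]
  exact mono_mem_W p (by simp)

lemma mul_mem_W {a b : ℕ} {x y : V p n} (hx : x ∈ W p a) (hy : y ∈ W p b) :
    x * y ∈ W p (a + b) := by
  have h : (W p a : Submodule (ZMod p) (V p n)) * W p b ≤ W p (a + b) := by
    rw [W, W, Submodule.span_mul_span]
    apply Submodule.span_le.2
    rintro z ⟨u, ⟨T, hT, rfl⟩, w, ⟨T', hT', rfl⟩, rfl⟩
    have : mono p T * mono p T' ∈ W p (a + b) := by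
      rw [mono_mul]
      exact mono_mem_W p (le_trans (Finset.card_union_le T T') (Nat.add_le_add hT hT'))
    exact this
  exact h (Submodule.mul_mem_mul hx hy)

lemma prod_mem_W {α : Type*} (s : Finset α) (f : α → V p n)
    (hf : ∀ i ∈ s, f i ∈ W p 1) : (∏ i ∈ s, f i) ∈ W p s.card := by
  classical
  induction s using Finset.induction_on with
  | empty => simpa using one_mem_W p 0
  | insert _ _ hx ih =>
    rename_i a s
    rw [Finset.prod_insert hx, Finset.card_insert_of_notMem hx]
    have := mul_mem_W p (hf a (Finset.mem_insert_self a s))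
      (ih fun i hi => hf i (Finset.mem_insert_of_mem hi))
    simpa [Nat.add_comm] using this

noncomputable def L (F : Finset (Fin n)) : V p n :=
  fun A => ((F ∩ A).card : ZMod p)

lemma L_mem_W (F : Finset (Fin n)) : L p F ∈ W p 1 := by
  classical
  have : L p F = ∑ i ∈ F, mono p {i} := by
    funext A
    simp only [L, Finset.sum_apply, mono, Finset.singleton_subset_iff]
    rw [Finset.sum_boole, Finset.filter_mem_eq_inter]
  rw [this]
  exact Submodule.sum_mem _ fun i _ => mono_mem_W p (by simp)


noncomputable def fF (F : Finset (Fin n)) : V p n :=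
  ∏ s ∈ Finset.range (p - 1), (L p F - (s : ZMod p) • 1)

lemma fF_mem_W (F : Finset (Fin n)) : fF p F ∈ W p (p - 1) := by
  have := prod_mem_W p (Finset.range (p - 1))
    (fun s => L p F - (s : ZMod p) • 1) (fun s _ => by
      exact Submodule.sub_mem _ (L_mem_W p F)
        (Submodule.smul_mem _ _ (one_mem_W p 1)))
  simpa [fF] using this

lemma fF_apply (F A : Finset (Fin n)) :
    fF p F A = ∏ s ∈ Finset.range (p - 1), (((F ∩ A).card : ZMod p) - s) := by
  simp [fF, L]

noncomputable def gS (S : Finset (Fin n)) : V p n :=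
  mono p S * (L p Finset.univ - ((2 * p - 1 : ℕ) : ZMod p) • 1)

lemma gS_mem_W (hp : 2 ≤ p) {S : Finset (Fin n)} (hS : S.card ≤ p - 2) :
    gS p S ∈ W p (p - 1) := by
  have h := mul_mem_W p (mono_mem_W p hS)
    (Submodule.sub_mem _ (L_mem_W p Finset.univ)
      (Submodule.smul_mem _ (((2 * p - 1 : ℕ) : ZMod p)) (one_mem_W p 1)))
  have : p - 2 + 1 = p - 1 := by omega
  rw [this] at h
  exact h

lemma gS_apply (S A : Finset (Fin n)) :
    gS p S A = (if S ⊆ A then 1 else 0) * ((A.card : ZMod p) - ((2 * p - 1 : ℕ) : ZMod p)) := by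
  simp [gS, mono, L, Finset.univ_inter]


variable (hp : p.Prime)
include hp

lemma cast_eq_zero_iff (k : ℕ) : (k : ZMod p) = 0 ↔ p ∣ k :=
  ZMod.natCast_eq_zero_iff k p

lemma cast_2p1 : ((2 * p - 1 : ℕ) : ZMod p) = -1 := by
  have h1 : 1 ≤ p := hp.one_lt.le
  have : (2 * p - 1 : ℕ) = p + (p - 1) := by omega
  rw [this, Nat.cast_add, ZMod.natCast_self, zero_add, Nat.cast_sub h1]
  simp

lemma cast_succ_ne_zero {k : ℕ} (hk : k + 1 < p) : ((k : ZMod p) + 1) ≠ 0 := by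
  intro h
  have : ((k + 1 : ℕ) : ZMod p) = 0 := by push_cast; exact h
  rw [cast_eq_zero_iff p hp] at this
  exact absurd (Nat.le_of_dvd (Nat.succ_pos k) this) (by omega)

lemma fF_self_ne_zero {F : Finset (Fin n)} (hF : F.card = 2 * p - 1) :
    fF p F F ≠ 0 := by
  haveI : Fact p.Prime := ⟨hp⟩
  rw [fF_apply, Finset.inter_self, hF]
  apply Finset.prod_ne_zero_iff.2
  intro s hs
  rw [Finset.mem_range] at hs
  rw [cast_2p1 p hp]
  intro h
  apply cast_succ_ne_zero p hp (k := s) (by omega)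
  have : (s : ZMod p) = -1 := by linear_combination -h
  rw [this]; ring

lemma fF_other_eq_zero {F F' : Finset (Fin n)}
    (hle : (F ∩ F').card ≤ 2 * p - 2) (hne : (F ∩ F').card ≠ p - 1) :
    fF p F F' = 0 := by
  rw [fF_apply]
  set k := (F ∩ F').card with hk
  apply Finset.prod_eq_zero (i := k % p)
  · rw [Finset.mem_range]
    have h2 : 2 ≤ p := hp.two_le
    rcases Nat.lt_or_ge k p with h | h
    · rw [Nat.mod_eq_of_lt h]; omega
    · have : k % p = k - p := by
        rw [Nat.mod_eq_sub_mod h, Nat.mod_eq_of_lt (by omega)]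
      omega
  · have : ((k % p : ℕ) : ZMod p) = (k : ZMod p) := ZMod.natCast_mod k p
    rw [this]; ring

lemma gS_top_eq_zero {S A : Finset (Fin n)} (hA : A.card = 2 * p - 1) :
    gS p S A = 0 := by
  rw [gS_apply, hA, sub_self, mul_zero]

end FWaux


/-- Frankl–Wilson: if p is prime and 𝓕 is a family of (2p−1)-element subsets of an
n-element set such that no two distinct members intersect in exactly p−1 elements,
then |𝓕| ≤ C(n, p−1). -/
theorem frankl_wilson (p n : ℕ) (hp : p.Prime)
    (𝓕 : Finset (Finset (Fin n)))
    (hcard : ∀ F ∈ 𝓕, F.card = 2 * p - 1)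
    (hinter : ∀ F ∈ 𝓕, ∀ F' ∈ 𝓕, F ≠ F' → (F ∩ F').card ≠ p - 1) :
    𝓕.card ≤ n.choose (p - 1) := by
  classical
  haveI : Fact p.Prime := ⟨hp⟩
  have hp2 : 2 ≤ p := hp.two_le
  let v : ({F // F ∈ 𝓕} ⊕ {S : Finset (Fin n) // S.card ≤ p - 2}) → FWaux.V p n :=
    Sum.elim (fun F => FWaux.fF p F.1) (fun S => FWaux.gS p S.1)
  -- linear independence
  have hli : LinearIndependent (ZMod p) v := by
    rw [Fintype.linearIndependent_iff]
    intro c hc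
    have heval : ∀ A : Finset (Fin n),
        (∑ F : {F // F ∈ 𝓕}, c (Sum.inl F) * FWaux.fF p F.1 A)
        + (∑ S : {S : Finset (Fin n) // S.card ≤ p - 2},
            c (Sum.inr S) * FWaux.gS p S.1 A) = 0 := by
      intro A
      have := congrFun hc A
      rw [Finset.sum_apply] at this
      rw [Fintype.sum_sum_type] at this
      simpa [v] using this
    have h1 : ∀ F : {F // F ∈ 𝓕}, c (Sum.inl F) = 0 := by
      intro F
      have he := heval F.1
      have hz2 : (∑ S : {S : Finset (Fin n) // S.card ≤ p - 2},
          c (Sum.inr S) * FWaux.gS p S.1 F.1) = 0 := by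
        apply Finset.sum_eq_zero
        intro S _
        rw [FWaux.gS_top_eq_zero p hp (hcard F.1 F.2), mul_zero]
      rw [hz2, add_zero] at he
      rw [Finset.sum_eq_single F] at he
      · rcases mul_eq_zero.1 he with h | h
        · exact h
        · exact absurd h (FWaux.fF_self_ne_zero p hp (hcard F.1 F.2))
      · intro F' _ hne
        have hne' : F'.1 ≠ F.1 := fun h => hne (Subtype.ext h)
        have hle : (F'.1 ∩ F.1).card ≤ 2 * p - 2 := by
          have h1 : (F'.1 ∩ F.1).card ≤ F'.1.card := Finset.card_le_card Finset.inter_subset_left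
          have h2 : (F'.1 ∩ F.1).card ≠ 2 * p - 1 := by
            intro h
            apply hne'
            have hsub : F'.1 ∩ F.1 = F'.1 :=
              Finset.eq_of_subset_of_card_le Finset.inter_subset_left
                (by rw [h, hcard F'.1 F'.2])
            have : F'.1 ⊆ F.1 := by rw [← hsub]; exact Finset.inter_subset_right
            exact Finset.eq_of_subset_of_card_le this
              (by rw [hcard F'.1 F'.2, hcard F.1 F.2])
          have := hcard F'.1 F'.2
          omega
        rw [FWaux.fF_other_eq_zero p hp hle (hinter F'.1 F'.2 F.1 F.2 hne'), mul_zero]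
      · intro h
        exact absurd (Finset.mem_univ F) h
    have h2 : ∀ k (S : {S : Finset (Fin n) // S.card ≤ p - 2}), S.1.card = k →
        c (Sum.inr S) = 0 := by
      intro k
      induction k using Nat.strong_induction_on with
      | _ k ih =>
        intro S hSk
        have he := heval S.1
        have hz1 : (∑ F : {F // F ∈ 𝓕}, c (Sum.inl F) * FWaux.fF p F.1 S.1) = 0 :=
          Finset.sum_eq_zero fun F _ => by rw [h1 F, zero_mul]
        rw [hz1, zero_add] at he
        rw [Finset.sum_eq_single S] at he
        · have hfac : FWaux.gS p S.1 S.1 = (k : ZMod p) + 1 := by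
            rw [FWaux.gS_apply, if_pos (Finset.Subset.refl _), one_mul,
              FWaux.cast_2p1 p hp, hSk]
            ring
          rw [hfac] at he
          rcases mul_eq_zero.1 he with h | h
          · exact h
          · exact absurd h (FWaux.cast_succ_ne_zero p hp (by omega))
        · intro S' _ hne
          rw [FWaux.gS_apply]
          by_cases hsub : S'.1 ⊆ S.1
          · have hne' : S'.1 ≠ S.1 := fun h => hne (Subtype.ext h)
            have hlt : S'.1.card < k := by
              rw [← hSk]
              exact Finset.card_lt_card (Finset.ssubset_iff_subset_ne.2 ⟨hsub, hne'⟩)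
            rw [ih S'.1.card hlt S' rfl, zero_mul]
          · rw [if_neg hsub, zero_mul, mul_zero]
        · intro h
          exact absurd (Finset.mem_univ S) h
    intro i
    rcases i with F | S
    · exact h1 F
    · exact h2 S.1.card S rfl
  -- membership in W (p-1)
  have hmem : ∀ i, v i ∈ FWaux.W p (p - 1) := by
    rintro (F | S)
    · exact FWaux.fF_mem_W p F.1
    · exact FWaux.gS_mem_W p hp2 S.2
  let v' : _ → FWaux.W p (p - 1) := fun i => ⟨v i, hmem i⟩
  have hli' : LinearIndependent (ZMod p) v' :=
    LinearIndependent.of_comp (FWaux.W p (p - 1)).subtype hli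
  haveI : Module.Finite (ZMod p) (FWaux.W p (p - 1) : Submodule (ZMod p) (FWaux.V p n)) := by
    rw [FWaux.W]
    exact FiniteDimensional.span_of_finite _ (Set.toFinite _)
  have hcardle : Fintype.card ({F // F ∈ 𝓕} ⊕ {S : Finset (Fin n) // S.card ≤ p - 2}) ≤ Module.finrank (ZMod p)
      (FWaux.W p (p - 1) : Submodule (ZMod p) (FWaux.V p n)) :=
    hli'.fintype_card_le_finrank
  -- bound the finrank
  set 𝒯 : Finset (Finset (Fin n)) := Finset.univ.filter (fun T => T.card ≤ p - 1) with h𝒯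
  have hWspan : (FWaux.W p (p - 1) : Submodule (ZMod p) (FWaux.V p n)) =
      Submodule.span (ZMod p) ((𝒯.image (FWaux.mono p) : Finset (FWaux.V p n)) : Set (FWaux.V p n)) := by
    rw [FWaux.W, Finset.coe_image]
    congr 1
    ext T
    simp [h𝒯]
  have hrk : Module.finrank (ZMod p)
      (FWaux.W p (p - 1) : Submodule (ZMod p) (FWaux.V p n)) ≤ 𝒯.card := by
    rw [hWspan]
    exact le_trans (finrank_span_finset_le_card _) Finset.card_image_le
  -- counting
  set 𝒮 : Finset (Finset (Fin n)) := Finset.univ.filter (fun T => T.card ≤ p - 2) with h𝒮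
  have hcard_ι : Fintype.card ({F // F ∈ 𝓕} ⊕ {S : Finset (Fin n) // S.card ≤ p - 2})
      = 𝓕.card + 𝒮.card := by
    rw [Fintype.card_sum, Fintype.card_coe, Fintype.card_subtype]
  have h𝒯card : 𝒯.card = 𝒮.card + n.choose (p - 1) := by
    set 𝒟 : Finset (Finset (Fin n)) := Finset.univ.filter (fun T => T.card = p - 1) with h𝒟
    have hunion : 𝒯 = 𝒮 ∪ 𝒟 := by
      ext T
      simp only [h𝒯, h𝒮, h𝒟, Finset.mem_union, Finset.mem_filter, Finset.mem_univ, true_and]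
      omega
    have hdisj : Disjoint 𝒮 𝒟 := by
      rw [Finset.disjoint_left]
      intro T hT hT'
      simp only [h𝒮, h𝒟, Finset.mem_filter, Finset.mem_univ, true_and] at hT hT'
      omega
    have h𝒟card : 𝒟.card = n.choose (p - 1) := by
      have : 𝒟 = Finset.powersetCard (p - 1) Finset.univ := by
        ext T
        simp [h𝒟, Finset.mem_powersetCard_univ]
      rw [this, Finset.card_powersetCard, Finset.card_univ, Fintype.card_fin]
    rw [hunion, Finset.card_union_of_disjoint hdisj, h𝒟card]
  omega
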